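/- Let L be a finite lattice containing two incomparable elements a, b chosen on the minimal level containing incomparable elements. Then a ∧ b is exactly one level below a and b, and the set {x ∈ L : x ≤ a ∧ b} is linearly ordered. -/

import Mathlib

/-- The level of `x` in a finite poset: the maximal length (cardinality) of a chain
whose greatest element is `x`. -/
noncomputable def level {P : Type*} [PartialOrder P] [Fintype P] (x : P) : ℕ :=
  sSup {n | ∃ C : Finset P, IsChain (· ≤ ·) (C : Set P) ∧ x ∈ C ∧
    (∀ y ∈ C, y ≤ x) ∧ C.card = n}

section aux
variable {P : Type*} [PartialOrder P] [Fintype P]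

private abbrev levelSet (x : P) : Set ℕ :=
  {n | ∃ C : Finset P, IsChain (· ≤ ·) (C : Set P) ∧ x ∈ C ∧ (∀ y ∈ C, y ≤ x) ∧ C.card = n}

private lemma level_bdd (x : P) : BddAbove (levelSet x) := by
  refine ⟨Fintype.card P, fun n hn => ?_⟩
  obtain ⟨C, _, _, _, rfl⟩ := hn
  exact Finset.card_le_univ C

private lemma level_one_mem (x : P) : 1 ∈ levelSet x := by
  refine ⟨{x}, ?_, by simp, by simp, by simp⟩
  simp only [Finset.coe_singleton]
  exact Set.subsingleton_singleton.isChain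

private lemma level_spec (x : P) : level x ∈ levelSet x :=
  Nat.sSup_mem ⟨1, level_one_mem x⟩ (level_bdd x)

private lemma le_level {x : P} {n : ℕ} (hn : n ∈ levelSet x) : n ≤ level x :=
  le_csSup (level_bdd x) hn

private lemma level_pos (x : P) : 1 ≤ level x := le_level (level_one_mem x)

private lemma level_mono {x y : P} (h : x ≤ y) : level x ≤ level y := by
  classical
  obtain ⟨C, hC, hxC, hle, hcard⟩ := level_spec x
  have hchain : IsChain (· ≤ ·) ((insert y C : Finset P) : Set P) := by
    rw [Finset.coe_insert]
    exact hC.insert (fun z hz _ => Or.inr ((hle z hz).trans h))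
  refine le_trans ?_ (le_level ⟨insert y C, hchain, Finset.mem_insert_self _ _,
    fun z hz => ?_, rfl⟩)
  · rw [← hcard]; exact Finset.card_le_card (Finset.subset_insert _ _)
  · rcases Finset.mem_insert.1 hz with rfl | hz
    · exact le_rfl
    · exact (hle z hz).trans h

private lemma level_strictMono {x y : P} (h : x < y) : level x < level y := by
  classical
  obtain ⟨C, hC, hxC, hle, hcard⟩ := level_spec x
  have hyC : y ∉ C := fun hy => absurd (hle y hy) (not_le_of_gt h)
  have hchain : IsChain (· ≤ ·) ((insert y C : Finset P) : Set P) := by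
    rw [Finset.coe_insert]
    exact hC.insert (fun z hz _ => Or.inr ((hle z hz).trans h.le))
  have : level x + 1 ≤ level y := by
    refine le_level ⟨insert y C, hchain, Finset.mem_insert_self _ _, fun z hz => ?_, ?_⟩
    · rcases Finset.mem_insert.1 hz with rfl | hz
      · exact le_rfl
      · exact (hle z hz).trans h.le
    · rw [Finset.card_insert_of_notMem hyC, hcard]
  omega

/-- From a top element of level `n` extract an element strictly below with level `≥ n - 1`. -/
private lemma exists_below {x : P} (h : 2 ≤ level x) :
    ∃ c : P, c < x ∧ level x - 1 ≤ level c := by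
  classical
  obtain ⟨C, hC, hxC, hle, hcard⟩ := level_spec x
  have hne : (C.erase x).Nonempty := by
    rw [← Finset.card_pos, Finset.card_erase_of_mem hxC, hcard]; omega
  obtain ⟨c, hcC, hcmax⟩ : ∃ c ∈ C.erase x, ∀ z ∈ C.erase x, ¬ c < z := by
    obtain ⟨c, hc⟩ := Finset.exists_maximal hne
    exact ⟨c, hc.prop, fun z hz hcz => absurd (hc.2 hz hcz.le) (not_le_of_gt hcz)⟩
  have hcC' : c ∈ C := Finset.mem_of_mem_erase hcC
  have hcx : c < x := lt_of_le_of_ne (hle c hcC') (Finset.ne_of_mem_erase hcC)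
  refine ⟨c, hcx, ?_⟩
  have hchain : IsChain (· ≤ ·) ((C.erase x : Finset P) : Set P) :=
    hC.mono (by simp [Finset.erase_subset])
  have hmem : C.card - 1 ∈ levelSet c := by
    refine ⟨C.erase x, hchain, hcC, fun z hz => ?_, by
      rw [Finset.card_erase_of_mem hxC]⟩
    rcases eq_or_ne z c with rfl | hzc
    · exact le_rfl
    · rcases hC (Finset.mem_coe.2 (Finset.mem_of_mem_erase hz)) (Finset.mem_coe.2 hcC') hzc with h1 | h1
      · exact h1
      · exact absurd (lt_of_le_of_ne h1 (Ne.symm hzc)) (hcmax z hz)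
  have := le_level hmem
  omega

end aux

/-- If `a, b` are incomparable elements on the minimal level `k` containing
incomparable elements of a finite lattice `L` (all elements of level `< k` being
pairwise comparable), then `a ⊓ b` is exactly one level below `a` and `b`, and
`{x : x ≤ a ⊓ b}` is linearly ordered. -/
theorem stmt_10 {L : Type*} [Lattice L] [Fintype L] (a b : L) (k : ℕ)
    (hab1 : ¬ a ≤ b) (hab2 : ¬ b ≤ a)
    (ha : level a = k) (hb : level b = k)
    (hmin : ∀ u v : L, level u < k → level v < k → u ≤ v ∨ v ≤ u) :
    level (a ⊓ b) + 1 = level a ∧ level (a ⊓ b) + 1 = level b ∧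
    (∀ u v : L, u ≤ a ⊓ b → v ≤ a ⊓ b → u ≤ v ∨ v ≤ u) := by
  have hlta : a ⊓ b < a := inf_lt_left.2 hab1
  have hltb : a ⊓ b < b := inf_lt_right.2 hab2
  have h1 : level (a ⊓ b) < k := ha ▸ level_strictMono hlta
  have hk2 : 2 ≤ k := by have := level_pos (a ⊓ b); omega
  obtain ⟨c, hca, hcl⟩ := exists_below (x := a) (by omega)
  obtain ⟨d, hdb, hdl⟩ := exists_below (x := b) (by omega)
  rw [ha] at hcl; rw [hb] at hdl
  have hck : level c < k := ha ▸ level_strictMono hca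
  have hdk : level d < k := hb ▸ level_strictMono hdb
  have hge : k - 1 ≤ level (a ⊓ b) := by
    rcases hmin c d hck hdk with h | h
    · have : c ≤ a ⊓ b := le_inf hca.le (h.trans hdb.le)
      have := level_mono this; omega
    · have : d ≤ a ⊓ b := le_inf (h.trans hca.le) hdb.le
      have := level_mono this; omega
  refine ⟨by omega, by omega, fun u v hu hv => ?_⟩
  have hu' : level u < k := lt_of_le_of_lt (level_mono hu) h1
  have hv' : level v < k := lt_of_le_of_lt (level_mono hv) h1
  exact hmin u v hu' hv'
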